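/- arXiv:1403.7255 — 2 statements merged into one kernel-verified Lean document; each statement's English description precedes it below -/
import Mathlib

section
/- For all real x > 0, u > 0, and every integer r with r ≥ max(1, u), one has (1 + x)^(2r) ≤ (2r/u)^r · exp(u·x²). -/
theorem stmt0 (x u : ℝ) (hx : 0 < x) (hu : 0 < u) (r : ℕ)
    (hr1 : 1 ≤ r) (hru : u ≤ (r : ℝ)) :
    (1 + x) ^ (2 * r) ≤ (2 * (r : ℝ) / u) ^ r * Real.exp (u * x ^ 2) := by
  have hr0 : (0:ℝ) < r := lt_of_lt_of_le hu hru
  have hstep : (1 + x) ^ 2 ≤ 2 * ((r:ℝ)/u) * Real.exp (u * x ^ 2 / r) := by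
    have h1 : (1 + x) ^ 2 ≤ 2 * (1 + x ^ 2) := by nlinarith [sq_nonneg (1 - x)]
    have h2 : (u / r) * (1 + x ^ 2) ≤ 1 + u * x ^ 2 / r := by
      have : u / r ≤ 1 := (div_le_one hr0).mpr hru
      have hx2 : 0 ≤ x ^ 2 := sq_nonneg x
      have heq : u * x ^ 2 / r = u / r * x ^ 2 := by ring
      rw [heq]
      nlinarith
    have h3 : 1 + u * x ^ 2 / r ≤ Real.exp (u * x ^ 2 / r) := by
      have := Real.add_one_le_exp (u * x ^ 2 / r)
      linarith
    have h4 : (u / r) * (1 + x ^ 2) ≤ Real.exp (u * x ^ 2 / r) := le_trans h2 h3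
    have h5 : (1 + x ^ 2) ≤ (r / u) * Real.exp (u * x ^ 2 / r) := by
      calc (1 + x ^ 2) = ((r:ℝ)/u) * ((u / r) * (1 + x ^ 2)) := by
              field_simp
        _ ≤ _ := by
              apply mul_le_mul_of_nonneg_left h4 (by positivity)
    calc (1 + x) ^ 2 ≤ 2 * (1 + x ^ 2) := h1
      _ ≤ 2 * ((r/u) * Real.exp (u * x ^ 2 / r)) := by linarith
      _ = 2 * ((r:ℝ)/u) * Real.exp (u * x ^ 2 / r) := by ring
  have hpow : ((1 + x) ^ 2) ^ r ≤ (2 * ((r:ℝ)/u) * Real.exp (u * x ^ 2 / r)) ^ r :=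
    pow_le_pow_left₀ (by positivity) hstep r
  calc (1 + x) ^ (2 * r) = ((1 + x) ^ 2) ^ r := by rw [pow_mul]
    _ ≤ (2 * ((r:ℝ)/u) * Real.exp (u * x ^ 2 / r)) ^ r := hpow
    _ = (2 * (r:ℝ)/u) ^ r * (Real.exp (u * x ^ 2 / r)) ^ r := by
        rw [mul_pow]; ring_nf
    _ = (2 * (r:ℝ)/u) ^ r * Real.exp (u * x ^ 2) := by
        rw [← Real.exp_nat_mul]
        congr 1
        field_simp
end

section
/- For all real x > 0, u > 0, and every integer r ≥ max(1, u), one has 1 + u^r · (1 + x)^(2r) ≤ exp(2·r·u·(1 + x²)). -/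
lemma aux_one_add_pow (s : ℝ) (hs : 0 ≤ s) (r : ℕ) (hr : 1 ≤ r) :
    1 + s ^ r ≤ (1 + s) ^ r := by
  induction r, hr using Nat.le_induction with
  | base => simp
  | succ n hn ih =>
    have hsn : 0 ≤ s ^ n := pow_nonneg hs n
    calc 1 + s ^ (n + 1) = 1 + s ^ n * s := by ring
    _ ≤ (1 + s ^ n) * (1 + s) := by nlinarith
    _ ≤ (1 + s) ^ n * (1 + s) := by nlinarith [pow_nonneg (by linarith : (0:ℝ) ≤ 1 + s) n]
    _ = (1 + s) ^ (n + 1) := by ring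

theorem stmt1 (x u : ℝ) (hx : 0 < x) (hu : 0 < u) (r : ℕ)
    (hr1 : 1 ≤ r) (hru : u ≤ (r : ℝ)) :
    1 + u ^ r * (1 + x) ^ (2 * r) ≤ Real.exp (2 * (r : ℝ) * u * (1 + x ^ 2)) := by
  set s : ℝ := 2 * u * (1 + x ^ 2) with hs
  have hs0 : 0 ≤ s := by nlinarith
  have h1 : u ^ r * (1 + x) ^ (2 * r) = (u * (1 + x) ^ 2) ^ r := by
    rw [mul_pow, ← pow_mul]
  have h2 : u * (1 + x) ^ 2 ≤ s := by nlinarith [sq_nonneg (1 - x)]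
  have h3 : (u * (1 + x) ^ 2) ^ r ≤ s ^ r :=
    pow_le_pow_left₀ (by positivity) h2 r
  have h4 : (1 + s) ^ r ≤ Real.exp s ^ r :=
    pow_le_pow_left₀ (by linarith) (by linarith [Real.add_one_le_exp s]) r
  have h5 : Real.exp s ^ r = Real.exp (2 * (r : ℝ) * u * (1 + x ^ 2)) := by
    rw [← Real.exp_nat_mul, hs]; ring_nf
  calc 1 + u ^ r * (1 + x) ^ (2 * r) = 1 + (u * (1 + x) ^ 2) ^ r := by rw [h1]
  _ ≤ 1 + s ^ r := by linarith
  _ ≤ (1 + s) ^ r := aux_one_add_pow s hs0 r hr1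
  _ ≤ Real.exp s ^ r := h4
  _ = _ := h5
end
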